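/- Let d ≥ 1, let k : ℝ^d × ℝ^d → [0,∞) be measurable, let Σ : ℝ^d → [0,∞) be measurable with Σ(v) = ∫_{ℝ^d} k(w,v) dw (integration over the first argument) for almost every v, and assume there exists Σ_max > 0 with Σ(v) ≤ Σ_max for almost every v. Then for every real α ≠ 0 and every g ∈ L¹(ℝ^d; ℂ) there exists a unique f ∈ L¹(ℝ^d; ℂ) such that iα f(v) + Σ(v) f(v) - ∫_{ℝ^d} k(v,w) f(w) dw = g(v) for almost every v, and moreover ∫_{ℝ^d} |f| ≤ ϑ(|α|) ∫_{ℝ^d} |g|, where ϑ(r) = (1/r) · (1 - Σ_max/√(r² + Σ_max²))^{-1}. In particular every nonzero purely imaginary number belongs to the resolvent set of the operator L f = K f - Σ f on L¹(ℝ^d; ℂ), with ‖R(iα, L)‖ ≤ ϑ(|α|). -/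

import Mathlib

open MeasureTheory Real Set Filter ENNReal

noncomputable section

abbrev Euc (d : ℕ) := EuclideanSpace ℝ (Fin d)

lemma ratio_mono (α t S : ℝ) (hα : α ≠ 0) (ht : 0 ≤ t) (htS : t ≤ S) :
    t / Real.sqrt (α ^ 2 + t ^ 2) ≤ S / Real.sqrt (α ^ 2 + S ^ 2) := by
  have hα2 : 0 < α ^ 2 := by positivity
  have hA : 0 < Real.sqrt (α ^ 2 + t ^ 2) := Real.sqrt_pos.2 (by positivity)
  have hB : 0 < Real.sqrt (α ^ 2 + S ^ 2) := Real.sqrt_pos.2 (by nlinarith)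
  rw [div_le_div_iff₀ hA hB]
  have hA2 := Real.sq_sqrt (show (0:ℝ) ≤ α ^ 2 + t ^ 2 by positivity)
  have hB2 := Real.sq_sqrt (show (0:ℝ) ≤ α ^ 2 + S ^ 2 by nlinarith)
  have key : (t * Real.sqrt (α ^ 2 + S ^ 2)) ^ 2 ≤ (S * Real.sqrt (α ^ 2 + t ^ 2)) ^ 2 := by
    nlinarith [mul_self_le_mul_self ht htS]
  calc t * Real.sqrt (α ^ 2 + S ^ 2)
      = Real.sqrt ((t * Real.sqrt (α ^ 2 + S ^ 2)) ^ 2) :=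
        (Real.sqrt_sq (by positivity)).symm
    _ ≤ Real.sqrt ((S * Real.sqrt (α ^ 2 + t ^ 2)) ^ 2) := Real.sqrt_le_sqrt key
    _ = S * Real.sqrt (α ^ 2 + t ^ 2) := Real.sqrt_sq (mul_nonneg (ht.trans htS) hA.le)

lemma kernel_bound (d : ℕ) (k : Euc d → Euc d → ℝ)
    (hk : Measurable (Function.uncurry k)) (hkpos : ∀ v w, 0 ≤ k v w)
    (Sig : Euc d → ℝ) (hSigpos : ∀ v, 0 ≤ Sig v)
    (hSig : ∀ᵐ v : Euc d ∂volume,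
      ∫⁻ w : Euc d, ENNReal.ofReal (k w v) = ENNReal.ofReal (Sig v))
    (h : Euc d → ℂ) (hh : Integrable h)
    (φ : Euc d → ℝ) (hφ : Integrable φ)
    (hb : ∀ᵐ w : Euc d ∂volume, Sig w * ‖h w‖ ≤ φ w) :
    Integrable (fun v : Euc d => ∫ w : Euc d, (k v w : ℂ) * h w) ∧
    (∫ v : Euc d, ‖∫ w : Euc d, (k v w : ℂ) * h w‖) ≤ (∫ w : Euc d, φ w) ∧
    (∀ᵐ v : Euc d ∂volume, Integrable (fun w : Euc d => (k v w : ℂ) * h w)) := by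
  set μ : Measure (Euc d) := volume with hμ
  set F : Euc d × Euc d → ℂ := fun p => (k p.1 p.2 : ℂ) * h p.2 with hF
  have hFm : AEStronglyMeasurable F (μ.prod μ) := by
    apply AEStronglyMeasurable.mul
    · exact (Complex.measurable_ofReal.comp hk).aestronglyMeasurable
    · exact hh.aestronglyMeasurable.comp_quasiMeasurePreserving
        Measure.quasiMeasurePreserving_snd
  have hen : ∀ p : Euc d × Euc d,
      (‖F p‖₊ : ℝ≥0∞) = ENNReal.ofReal (k p.1 p.2) * (‖h p.2‖₊ : ℝ≥0∞) := by
    intro p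
    rw [hF]
    rw [nnnorm_mul, ENNReal.coe_mul]
    congr 1
    rw [← enorm_eq_nnnorm, ← ofReal_norm, Complex.norm_real, Real.norm_of_nonneg (hkpos _ _)]
  have hmeas_ew : AEMeasurable
      (fun p : Euc d × Euc d => ENNReal.ofReal (k p.1 p.2) * (‖h p.2‖₊ : ℝ≥0∞))
      (μ.prod μ) := by
    apply AEMeasurable.fun_mul
    · exact (ENNReal.measurable_ofReal.comp hk).aemeasurable
    · exact hh.aestronglyMeasurable.enorm.comp_quasiMeasurePreserving
        Measure.quasiMeasurePreserving_snd
  have hkv : ∀ w : Euc d, Measurable fun v => ENNReal.ofReal (k v w) := fun w =>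
    ENNReal.measurable_ofReal.comp (hk.comp measurable_prodMk_right)
  have hφpos : 0 ≤ᵐ[μ] φ := by
    filter_upwards [hb] with w hw
    exact le_trans (mul_nonneg (hSigpos w) (norm_nonneg _)) hw
  have key_ae : ∀ᵐ w ∂μ,
      (∫⁻ v, ENNReal.ofReal (k v w) * (‖h w‖₊ : ℝ≥0∞) ∂μ) ≤ ENNReal.ofReal (φ w) := by
    filter_upwards [hSig, hb] with w h1 h2
    rw [lintegral_mul_const _ (hkv w), h1]
    calc ENNReal.ofReal (Sig w) * (‖h w‖₊ : ℝ≥0∞)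
        = ENNReal.ofReal (Sig w * ‖h w‖) := by
          rw [ENNReal.ofReal_mul (hSigpos w), ofReal_norm, enorm_eq_nnnorm]
      _ ≤ ENNReal.ofReal (φ w) := ENNReal.ofReal_le_ofReal h2
  have hI1 : (∫⁻ v, ∫⁻ w, ENNReal.ofReal (k v w) * (‖h w‖₊ : ℝ≥0∞) ∂μ ∂μ)
      ≤ ENNReal.ofReal (∫ w, φ w ∂μ) := by
    rw [lintegral_lintegral_swap hmeas_ew]
    calc (∫⁻ w, ∫⁻ v, ENNReal.ofReal (k v w) * (‖h w‖₊ : ℝ≥0∞) ∂μ ∂μ)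
        ≤ ∫⁻ w, ENNReal.ofReal (φ w) ∂μ := lintegral_mono_ae key_ae
      _ = ENNReal.ofReal (∫ w, φ w ∂μ) :=
          (ofReal_integral_eq_lintegral_ofReal hφ hφpos).symm
  have hlin : (∫⁻ p, (‖F p‖₊ : ℝ≥0∞) ∂(μ.prod μ))
      = ∫⁻ v, ∫⁻ w, ENNReal.ofReal (k v w) * (‖h w‖₊ : ℝ≥0∞) ∂μ ∂μ := by
    rw [lintegral_congr hen, lintegral_prod _ hmeas_ew]
  have hFint : Integrable F (μ.prod μ) := by
    refine ⟨hFm, ?_⟩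
    rw [HasFiniteIntegral]
    simp only [enorm_eq_nnnorm]
    rw [hlin]
    exact lt_of_le_of_lt hI1 ENNReal.ofReal_lt_top
  refine ⟨hFint.integral_prod_left, ?_, hFint.prod_right_ae⟩
  have hGm : AEStronglyMeasurable (fun v => ∫ w, F (v, w) ∂μ) μ :=
    hFm.integral_prod_right'
  calc (∫ v, ‖∫ w : Euc d, (k v w : ℂ) * h w‖ ∂μ)
      = (∫⁻ v, (‖∫ w, F (v, w) ∂μ‖₊ : ℝ≥0∞) ∂μ).toReal :=
        integral_norm_eq_lintegral_enorm hGm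
    _ ≤ (ENNReal.ofReal (∫ w, φ w ∂μ)).toReal := by
        apply ENNReal.toReal_mono ENNReal.ofReal_ne_top
        calc (∫⁻ v, (‖∫ w, F (v, w) ∂μ‖₊ : ℝ≥0∞) ∂μ)
            ≤ ∫⁻ v, ∫⁻ w, (‖F (v, w)‖₊ : ℝ≥0∞) ∂μ ∂μ :=
              lintegral_mono fun v => enorm_integral_le_lintegral_enorm _
          _ = ∫⁻ v, ∫⁻ w, ENNReal.ofReal (k v w) * (‖h w‖₊ : ℝ≥0∞) ∂μ ∂μ := by
              simp_rw [hen]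
          _ ≤ _ := hI1
    _ = ∫ w, φ w ∂μ := ENNReal.toReal_ofReal (integral_nonneg_of_ae hφpos)


theorem imaginary_axis_resolvent
    (d : ℕ) (hd : 1 ≤ d) (k : Euc d → Euc d → ℝ)
    (hk : Measurable (Function.uncurry k)) (hkpos : ∀ v w, 0 ≤ k v w)
    (Sig : Euc d → ℝ) (hSigmeas : Measurable Sig) (hSigpos : ∀ v, 0 ≤ Sig v)
    (hSig : ∀ᵐ v : Euc d ∂volume,
      ∫⁻ w : Euc d, ENNReal.ofReal (k w v) = ENNReal.ofReal (Sig v))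
    (Smax : ℝ) (hSmax : 0 < Smax) (hSigle : ∀ᵐ v : Euc d ∂volume, Sig v ≤ Smax) :
    ∀ α : ℝ, α ≠ 0 → ∀ g : Euc d → ℂ, Integrable g →
      ∃ f : Euc d → ℂ, Integrable f ∧
        (∀ᵐ v : Euc d ∂volume,
          Complex.I * (α : ℂ) * f v + (Sig v : ℂ) * f v
            - (∫ w : Euc d, (k v w : ℂ) * f w) = g v) ∧
        (∫ v : Euc d, ‖f v‖
          ≤ (1 / |α|) * (1 - Smax / Real.sqrt (α ^ 2 + Smax ^ 2))⁻¹ * ∫ v : Euc d, ‖g v‖) ∧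
        ∀ f' : Euc d → ℂ, Integrable f' →
          (∀ᵐ v : Euc d ∂volume,
            Complex.I * (α : ℂ) * f' v + (Sig v : ℂ) * f' v
              - (∫ w : Euc d, (k v w : ℂ) * f' w) = g v) →
          f' =ᵐ[volume] f := by
  intro α hα g hg
  have hα2 : 0 < α ^ 2 := by positivity
  set q : ℝ := Smax / Real.sqrt (α ^ 2 + Smax ^ 2) with hqdef
  have hsq : 0 < Real.sqrt (α ^ 2 + Smax ^ 2) := Real.sqrt_pos.2 (by positivity)
  have hq0 : 0 ≤ q := div_nonneg hSmax.le hsq.le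
  have hq1 : q < 1 := by
    rw [hqdef, div_lt_one hsq]
    nlinarith [Real.sq_sqrt (show (0:ℝ) ≤ α ^ 2 + Smax ^ 2 by positivity), hsq, hSmax]
  have h1q : 0 < 1 - q := by linarith
  set m : Euc d → ℂ := fun v => Complex.I * (α : ℂ) + (Sig v : ℂ) with hmdef
  have hmmeas : Measurable m := measurable_const.add (Complex.measurable_ofReal.comp hSigmeas)
  have hmnorm : ∀ v, ‖m v‖ = Real.sqrt (α ^ 2 + (Sig v) ^ 2) := by
    intro v
    have hre : (m v).re = Sig v := by simp [hmdef]
    have him : (m v).im = α := by simp [hmdef]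
    rw [Complex.norm_def, Complex.normSq_apply, hre, him]
    congr 1
    ring
  have habs : 0 < |α| := abs_pos.2 hα
  have hm_ge : ∀ v, |α| ≤ ‖m v‖ := by
    intro v
    rw [hmnorm v]
    calc |α| = Real.sqrt (α ^ 2) := by rw [Real.sqrt_sq_eq_abs]
      _ ≤ Real.sqrt (α ^ 2 + (Sig v) ^ 2) := Real.sqrt_le_sqrt (by nlinarith [sq_nonneg (Sig v)])
  have hm_ne : ∀ v, m v ≠ 0 := fun v => norm_pos_iff.1 (lt_of_lt_of_le habs (hm_ge v))
  have hratio : ∀ᵐ v : Euc d ∂volume, Sig v / ‖m v‖ ≤ q := by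
    filter_upwards [hSigle] with v hv
    rw [hmnorm v]
    exact ratio_mono α (Sig v) Smax hα (hSigpos v) hv
  have hptdiv : ∀ (u : Euc d → ℂ) w, ‖u w / m w‖ ≤ ‖u w‖ * |α|⁻¹ := by
    intro u w
    rw [norm_div, div_eq_mul_inv]
    gcongr
    exact hm_ge w
  -- division by m preserves integrability
  have hdiv : ∀ u : Euc d → ℂ, Integrable u → Integrable (fun w => u w / m w) := by
    intro u hu
    have hmeas : AEStronglyMeasurable (fun w => u w / m w) volume := by
      simp_rw [div_eq_mul_inv]
      exact hu.aestronglyMeasurable.mul hmmeas.inv.aestronglyMeasurable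
    apply Integrable.mono' (hu.norm.mul_const |α|⁻¹) hmeas
    filter_upwards with w
    exact hptdiv u w
  -- a.e. bound for the kernel lemma
  have hbb : ∀ u : Euc d → ℂ, ∀ᵐ w : Euc d ∂volume, Sig w * ‖u w / m w‖ ≤ q * ‖u w‖ := by
    intro u
    filter_upwards [hratio] with w hw
    rw [norm_div]
    calc Sig w * (‖u w‖ / ‖m w‖) = Sig w / ‖m w‖ * ‖u w‖ := by ring
      _ ≤ q * ‖u w‖ := mul_le_mul_of_nonneg_right hw (norm_nonneg _)
  -- the kernel operator applied to u / m
  have hKop : ∀ u : Euc d → ℂ, Integrable u →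
      Integrable (fun v : Euc d => ∫ w : Euc d, (k v w : ℂ) * (u w / m w)) ∧
      (∫ v : Euc d, ‖∫ w : Euc d, (k v w : ℂ) * (u w / m w)‖) ≤ q * ∫ w : Euc d, ‖u w‖ ∧
      (∀ᵐ v : Euc d ∂volume, Integrable (fun w : Euc d => (k v w : ℂ) * (u w / m w))) := by
    intro u hu
    have := kernel_bound d k hk hkpos Sig hSigpos hSig (fun w => u w / m w) (hdiv u hu)
      (fun w => q * ‖u w‖) (hu.norm.const_mul q) (hbb u)
    refine ⟨this.1, ?_, this.2.2⟩
    calc (∫ v : Euc d, ‖∫ w : Euc d, (k v w : ℂ) * (u w / m w)‖)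
        ≤ ∫ w : Euc d, q * ‖u w‖ := this.2.1
      _ = q * ∫ w : Euc d, ‖u w‖ := integral_const_mul q _
  -- set up the fixed-point map on L¹
  set X := Lp (α := Euc d) ℂ 1 (volume : Measure (Euc d)) with hX
  set Φ : X → X := fun u =>
    (hg.add (hKop (u : Euc d → ℂ) (L1.integrable_coeFn u)).1).toL1 _ with hΦdef
  have hΦcoe : ∀ u : X, (Φ u : Euc d → ℂ)
      =ᵐ[volume] fun v => g v + ∫ w : Euc d, (k v w : ℂ) * (u w / m w) := by
    intro u
    rw [hΦdef]
    exact Integrable.coeFn_toL1 _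
  have hdistX : ∀ a b : X, dist a b = ∫ v : Euc d, ‖(a : Euc d → ℂ) v - (b : Euc d → ℂ) v‖ := by
    intro a b
    rw [L1.dist_eq_integral_dist]
    simp_rw [dist_eq_norm]
  -- Lipschitz estimate
  have hlip : ∀ u₁ u₂ : X, dist (Φ u₁) (Φ u₂) ≤ q * dist u₁ u₂ := by
    intro u₁ u₂
    have hu₁ : Integrable (u₁ : Euc d → ℂ) volume := L1.integrable_coeFn u₁
    have hu₂ : Integrable (u₂ : Euc d → ℂ) volume := L1.integrable_coeFn u₂
    have hKd := hKop (fun w => u₁ w - u₂ w) (hu₁.sub hu₂)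
    have hae : (fun v => (Φ u₁ : Euc d → ℂ) v - (Φ u₂ : Euc d → ℂ) v)
        =ᵐ[volume] fun v => ∫ w : Euc d, (k v w : ℂ) * ((u₁ w - u₂ w) / m w) := by
      filter_upwards [hΦcoe u₁, hΦcoe u₂, (hKop _ hu₁).2.2, (hKop _ hu₂).2.2]
        with v h1 h2 h3 h4
      rw [h1, h2]
      have : (g v + ∫ w : Euc d, (k v w : ℂ) * (u₁ w / m w))
          - (g v + ∫ w : Euc d, (k v w : ℂ) * (u₂ w / m w))
          = (∫ w : Euc d, (k v w : ℂ) * (u₁ w / m w))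
            - ∫ w : Euc d, (k v w : ℂ) * (u₂ w / m w) := by ring
      rw [this, ← integral_sub h3 h4]
      apply integral_congr_ae
      filter_upwards with w
      ring
    calc dist (Φ u₁) (Φ u₂) = ∫ v : Euc d, ‖(Φ u₁ : Euc d → ℂ) v - (Φ u₂ : Euc d → ℂ) v‖ :=
          hdistX _ _
      _ = ∫ v : Euc d, ‖∫ w : Euc d, (k v w : ℂ) * ((u₁ w - u₂ w) / m w)‖ :=
          integral_congr_ae (hae.fun_comp norm)
      _ ≤ q * ∫ w : Euc d, ‖u₁ w - u₂ w‖ := hKd.2.1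
      _ = q * dist u₁ u₂ := by rw [hdistX u₁ u₂]
  have hcontr : ContractingWith ⟨q, hq0⟩ Φ :=
    ⟨by exact_mod_cast hq1, LipschitzWith.of_dist_le_mul hlip⟩
  set u : X := hcontr.fixedPoint Φ with hudef
  have hufix : Φ u = u := hcontr.fixedPoint_isFixedPt
  have huint : Integrable (u : Euc d → ℂ) volume := L1.integrable_coeFn u
  have hueq : (u : Euc d → ℂ)
      =ᵐ[volume] fun v => g v + ∫ w : Euc d, (k v w : ℂ) * (u w / m w) := by
    calc (u : Euc d → ℂ) =ᵐ[volume] (Φ u : Euc d → ℂ) := by rw [hufix]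
      _ =ᵐ[volume] _ := hΦcoe u
  -- the solution
  refine ⟨fun v => (u : Euc d → ℂ) v / m v, hdiv _ huint, ?_, ?_, ?_⟩
  · -- the equation
    filter_upwards [hueq] with v hv
    have h1 : Complex.I * (α : ℂ) * ((u : Euc d → ℂ) v / m v)
        + (Sig v : ℂ) * ((u : Euc d → ℂ) v / m v) = (u : Euc d → ℂ) v := by
      have h2 : Complex.I * (α : ℂ) * ((u : Euc d → ℂ) v / m v)
          + (Sig v : ℂ) * ((u : Euc d → ℂ) v / m v)
          = ((u : Euc d → ℂ) v / m v) * m v := by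
        simp only [hmdef]
        ring
      rw [h2, div_mul_cancel₀ _ (hm_ne v)]
    rw [h1, hv]
    ring
  · -- the norm bound
    have hKu := hKop (u : Euc d → ℂ) huint
    have hnormu : (∫ v : Euc d, ‖(u : Euc d → ℂ) v‖)
        ≤ (∫ v : Euc d, ‖g v‖) + q * ∫ v : Euc d, ‖(u : Euc d → ℂ) v‖ := by
      calc (∫ v : Euc d, ‖(u : Euc d → ℂ) v‖)
          = ∫ v : Euc d, ‖g v + ∫ w : Euc d, (k v w : ℂ) * (u w / m w)‖ :=
            integral_congr_ae (hueq.fun_comp norm)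
        _ ≤ ∫ v : Euc d, (‖g v‖ + ‖∫ w : Euc d, (k v w : ℂ) * (u w / m w)‖) := by
            apply integral_mono_of_nonneg (Eventually.of_forall fun v => norm_nonneg _)
              (hg.norm.add hKu.1.norm)
            exact Eventually.of_forall fun v => norm_add_le _ _
        _ = (∫ v : Euc d, ‖g v‖) + ∫ v : Euc d, ‖∫ w : Euc d, (k v w : ℂ) * (u w / m w)‖ :=
            integral_add hg.norm hKu.1.norm
        _ ≤ (∫ v : Euc d, ‖g v‖) + q * ∫ v : Euc d, ‖(u : Euc d → ℂ) v‖ := by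
            linarith [hKu.2.1]
    have hIu : (∫ v : Euc d, ‖(u : Euc d → ℂ) v‖) ≤ (1 - q)⁻¹ * ∫ v : Euc d, ‖g v‖ := by
      rw [inv_mul_eq_div, le_div_iff₀ h1q]
      linarith
    calc (∫ v : Euc d, ‖(u : Euc d → ℂ) v / m v‖)
        ≤ ∫ v : Euc d, ‖(u : Euc d → ℂ) v‖ * |α|⁻¹ :=
          integral_mono (hdiv _ huint).norm (huint.norm.mul_const _)
            (fun v => hptdiv _ v)
      _ = |α|⁻¹ * ∫ v : Euc d, ‖(u : Euc d → ℂ) v‖ := by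
          rw [integral_mul_const]
          ring
      _ ≤ |α|⁻¹ * ((1 - q)⁻¹ * ∫ v : Euc d, ‖g v‖) :=
          mul_le_mul_of_nonneg_left hIu (inv_nonneg.2 habs.le)
      _ = 1 / |α| * (1 - q)⁻¹ * ∫ v : Euc d, ‖g v‖ := by
          rw [one_div, mul_assoc]
  · -- uniqueness
    intro f' hf' heq'
    set u' : Euc d → ℂ := fun v => m v * f' v with hu'def
    have hu'int : Integrable u' volume := by
      have hmeas : AEStronglyMeasurable u' volume :=
        hmmeas.aestronglyMeasurable.mul hf'.aestronglyMeasurable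
      apply Integrable.mono' (hf'.norm.const_mul (|α| + Smax)) hmeas
      filter_upwards [hSigle] with v hv
      rw [hu'def, norm_mul]
      have hmle : ‖m v‖ ≤ |α| + Smax := by
        simp only [hmdef]
        calc ‖Complex.I * (α : ℂ) + ((Sig v : ℝ) : ℂ)‖
            ≤ ‖Complex.I * (α : ℂ)‖ + ‖((Sig v : ℝ) : ℂ)‖ := norm_add_le _ _
          _ = |α| + Sig v := by
              rw [norm_mul, Complex.norm_I, one_mul, Complex.norm_real,
                Complex.norm_real, Real.norm_eq_abs, Real.norm_eq_abs,
                abs_of_nonneg (hSigpos v)]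
          _ ≤ |α| + Smax := by linarith
      exact mul_le_mul_of_nonneg_right hmle (norm_nonneg _)
    have hf'u' : ∀ v, f' v = u' v / m v := fun v =>
      (mul_div_cancel_left₀ _ (hm_ne v)).symm
    have hU'coe : ((hu'int.toL1 u' : X) : Euc d → ℂ) =ᵐ[volume] u' := hu'int.coeFn_toL1
    have hfixU' : Φ (hu'int.toL1 u') = hu'int.toL1 u' := by
      simp only [hΦdef]
      rw [Integrable.toL1_eq_toL1_iff]
      filter_upwards [heq'] with v hv
      simp only [Pi.add_apply]
      have hKcongr : (∫ w : Euc d, (k v w : ℂ)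
          * (((hu'int.toL1 u' : X) : Euc d → ℂ) w / m w))
          = ∫ w : Euc d, (k v w : ℂ) * f' w := by
        apply integral_congr_ae
        filter_upwards [hU'coe] with w hw
        rw [hw, ← hf'u' w]
      rw [hKcongr]
      have h3 : u' v = Complex.I * (α : ℂ) * f' v + (Sig v : ℂ) * f' v := by
        simp only [hu'def, hmdef]
        ring
      rw [h3]
      linear_combination -hv
    have hU'u : hu'int.toL1 u' = u := hcontr.fixedPoint_unique hfixU'
    have hcoe : u' =ᵐ[volume] (u : Euc d → ℂ) := by
      calc u' =ᵐ[volume] ((hu'int.toL1 u' : X) : Euc d → ℂ) := hU'coe.symm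
        _ =ᵐ[volume] (u : Euc d → ℂ) := by rw [hU'u]
    filter_upwards [hcoe] with v hv
    rw [hf'u' v, hv]

end
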